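/- Let X be an infinite Polish zero-dimensional space that is not σ-compact. Then C_p(X) is uniformly homeomorphic to C_p(ω^ω), the function space of the irrationals. In particular, C_p(X) is uniformly homeomorphic to C_p(X) × C_p(X). -/

import Mathlib

open Set Function Filter Topology

/-- `C_p(X)`: continuous real-valued functions on `X` with the uniformity of
pointwise convergence. -/
def Cp (X : Type*) [TopologicalSpace X] : Type _ := {f : X → ℝ // Continuous f}

instance (X : Type*) [TopologicalSpace X] : UniformSpace (Cp X) :=
  inferInstanceAs (UniformSpace {f : X → ℝ // Continuous f})

namespace CpAux

variable {Z W : Type*} [TopologicalSpace Z] [TopologicalSpace W]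

lemma uc_val : UniformContinuous (fun f : Cp Z => (f.1 : Z → ℝ)) :=
  uniformContinuous_subtype_val

lemma uc_eval (z : Z) : UniformContinuous (fun f : Cp Z => f.1 z) :=
  (Pi.uniformContinuous_proj _ z).comp uc_val

/-- `Cp` of homeomorphic spaces are uniformly homeomorphic. -/
def cpCongr (e : Z ≃ₜ W) : Cp Z ≃ᵤ Cp W where
  toFun f := ⟨f.1 ∘ e.symm, f.2.comp e.continuous_symm⟩
  invFun f := ⟨f.1 ∘ e, f.2.comp e.continuous⟩
  left_inv f := Subtype.ext <| funext fun z => by simp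
  right_inv f := Subtype.ext <| funext fun w => by simp
  uniformContinuous_toFun := by
    apply UniformContinuous.subtype_mk
    exact uniformContinuous_pi.2 fun w => uc_eval (e.symm w)
  uniformContinuous_invFun := by
    apply UniformContinuous.subtype_mk
    exact uniformContinuous_pi.2 fun z => uc_eval (e z)

/-- splitting of `Cp` along a continuous idempotent (retraction). -/
noncomputable def cpSplit (r : Z → Z) (hr : Continuous r) (hrr : ∀ z, r (r z) = r z) :
    Cp Z ≃ᵤ Cp {z : Z // r z = z} ×
      {f : Z → ℝ // Continuous f ∧ ∀ z, r z = z → f z = 0} where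
  toFun f := (⟨fun a => f.1 a.1, f.2.comp continuous_subtype_val⟩,
              ⟨fun z => f.1 z - f.1 (r z), (f.2.sub (f.2.comp hr)),
                fun z hz => by dsimp only; rw [hz, sub_self]⟩)
  invFun p := ⟨fun z => p.1.1 ⟨r z, hrr z⟩ + p.2.1 z,
               (p.1.2.comp (hr.subtype_mk _)).add p.2.2.1⟩
  left_inv f := Subtype.ext <| funext fun z => by simp
  right_inv p := by
    obtain ⟨⟨g, hg⟩, ⟨h, hh, hh0⟩⟩ := p
    refine Prod.ext (Subtype.ext <| funext fun a => ?_) (Subtype.ext <| funext fun z => ?_)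
    · have ha : (⟨r a.1, hrr a.1⟩ : {z : Z // r z = z}) = a := Subtype.ext a.2
      simp only [ha]
      simp [hh0 a.1 a.2]
    · simp only
      rw [hh0 (r z) (hrr z)]
      have : (⟨r (r z), hrr (r z)⟩ : {z : Z // r z = z}) = ⟨r z, hrr z⟩ :=
        Subtype.ext (hrr z)
      rw [this]
      ring
  uniformContinuous_toFun := by
    apply UniformContinuous.prodMk
    · apply UniformContinuous.subtype_mk
      exact uniformContinuous_pi.2 fun a => uc_eval a.1
    · apply UniformContinuous.subtype_mk
      exact uniformContinuous_pi.2 fun z => (uc_eval z).sub (uc_eval (r z))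
  uniformContinuous_invFun := by
    apply UniformContinuous.subtype_mk
    refine uniformContinuous_pi.2 fun z => UniformContinuous.add ?_ ?_
    · exact (uc_eval (⟨r z, hrr z⟩ : {z : Z // r z = z})).comp uniformContinuous_fst
    · exact ((Pi.uniformContinuous_proj _ z).comp uniformContinuous_subtype_val).comp
        uniformContinuous_snd

/-- shift: `(ℕ → B) ≃ᵤ B × (ℕ → B)`. -/
def shiftEquiv (B : Type*) [UniformSpace B] : (ℕ → B) ≃ᵤ B × (ℕ → B) where
  toFun F := (F 0, fun n => F (n + 1))
  invFun p n := Nat.casesOn n p.1 (fun m => p.2 m)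
  left_inv F := by funext n; cases n <;> rfl
  right_inv p := by refine Prod.ext rfl (funext fun n => rfl)
  uniformContinuous_toFun :=
    (Pi.uniformContinuous_proj _ 0).prodMk
      (uniformContinuous_pi.2 fun n => Pi.uniformContinuous_proj _ (n + 1))
  uniformContinuous_invFun := uniformContinuous_pi.2 fun n => by
    cases n with
    | zero => exact uniformContinuous_fst
    | succ m => exact (Pi.uniformContinuous_proj _ m).comp uniformContinuous_snd

/-- `(ℕ → A × E) ≃ᵤ (ℕ → A) × (ℕ → E)`. -/
def prodPiEquiv (A E : Type*) [UniformSpace A] [UniformSpace E] :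
    (ℕ → A × E) ≃ᵤ (ℕ → A) × (ℕ → E) where
  toFun F := (fun n => (F n).1, fun n => (F n).2)
  invFun p n := (p.1 n, p.2 n)
  left_inv F := funext fun n => rfl
  right_inv p := rfl
  uniformContinuous_toFun :=
    (uniformContinuous_pi.2 fun n =>
        uniformContinuous_fst.comp (Pi.uniformContinuous_proj _ n)).prodMk
      (uniformContinuous_pi.2 fun n =>
        uniformContinuous_snd.comp (Pi.uniformContinuous_proj _ n))
  uniformContinuous_invFun := uniformContinuous_pi.2 fun n =>
    ((Pi.uniformContinuous_proj _ n).comp uniformContinuous_fst).prodMk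
      ((Pi.uniformContinuous_proj _ n).comp uniformContinuous_snd)

/-- `(ℕ ⊕ ℕ → B) ≃ᵤ (ℕ → B) × (ℕ → B)`. -/
def sumArrowEquiv (B : Type*) [UniformSpace B] :
    (ℕ ⊕ ℕ → B) ≃ᵤ (ℕ → B) × (ℕ → B) where
  toFun F := (fun n => F (Sum.inl n), fun n => F (Sum.inr n))
  invFun p := Sum.elim p.1 p.2
  left_inv F := funext fun x => by cases x <;> rfl
  right_inv p := rfl
  uniformContinuous_toFun :=
    (uniformContinuous_pi.2 fun n => Pi.uniformContinuous_proj _ (Sum.inl n)).prodMk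
      (uniformContinuous_pi.2 fun n => Pi.uniformContinuous_proj _ (Sum.inr n))
  uniformContinuous_invFun := uniformContinuous_pi.2 fun x => by
    cases x with
    | inl n => exact (Pi.uniformContinuous_proj _ n).comp uniformContinuous_fst
    | inr n => exact (Pi.uniformContinuous_proj _ n).comp uniformContinuous_snd

/-- `(ℕ → B) ≃ᵤ (ℕ → B) × (ℕ → B)`. -/
def piDouble (B : Type*) [UniformSpace B] : (ℕ → B) ≃ᵤ (ℕ → B) × (ℕ → B) :=
  (UniformEquiv.piCongrLeft (β := fun _ : ℕ => B)
      (Equiv.natSumNatEquivNat)).symm.trans (sumArrowEquiv B)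

/-- Pełczyński decomposition in the uniform category. -/
theorem pelczynski {A B E F : Type*} [UniformSpace A] [UniformSpace B]
    [UniformSpace E] [UniformSpace F]
    (e1 : A ≃ᵤ B × E) (e2 : B ≃ᵤ A × F) (e3 : B ≃ᵤ (ℕ → B)) :
    Nonempty (A ≃ᵤ B) ∧ Nonempty (A ≃ᵤ A × A) := by
  have bBB : B ≃ᵤ B × B :=
    e3.trans ((piDouble B).trans ((e3.symm.prodCongr e3.symm)))
  have bB : B ≃ᵤ A × B :=
    e3.trans <| (UniformEquiv.piCongrRight fun _ => e2).trans <|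
      (prodPiEquiv A F).trans <|
      ((shiftEquiv A).prodCongr (UniformEquiv.refl (ℕ → F))).trans <|
      (UniformEquiv.prodAssoc A (ℕ → A) (ℕ → F)).trans <|
      ((UniformEquiv.refl A).prodCongr
        ((prodPiEquiv A F).symm.trans
          ((UniformEquiv.piCongrRight fun _ => e2.symm).trans e3.symm)))
  have AeB : A ≃ᵤ B :=
    e1.trans <| (bBB.prodCongr (UniformEquiv.refl E)).trans <|
      (UniformEquiv.prodAssoc B B E).trans <|
      (((UniformEquiv.refl B).prodCongr e1.symm).trans
        ((UniformEquiv.prodComm B A).trans bB.symm))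
  exact ⟨⟨AeB⟩, ⟨AeB.trans (bBB.trans (AeB.symm.prodCongr AeB.symm))⟩⟩

end CpAux


open Set Function Filter Topology PiNat

namespace Hur

/-- value of a reversed-list node at coordinate `i`. -/
def nval (s : List ℕ) (i : ℕ) : ℕ := s.reverse.getD i 0

/-- The basic clopen set determined by a node (in reversed-list representation). -/
def Ext (s : List ℕ) : Set (ℕ → ℕ) := {y | res y s.length = s}

lemma mem_Ext {y : ℕ → ℕ} {s : List ℕ} : y ∈ Ext s ↔ res y s.length = s := Iff.rfl

lemma val_res (y : ℕ → ℕ) {i n : ℕ} (h : i < n) : nval (res y n) i = y i := by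
  induction n with
  | zero => omega
  | succ n ih =>
    rw [res_succ]
    rcases Nat.lt_or_ge i n with h' | h'
    · rw [nval, List.reverse_cons, List.getD_append _ _ _ _ (by simpa using h')]
      exact ih h'
    · have hin : i = n := by omega
      subst hin
      rw [nval, List.reverse_cons, List.getD_append_right _ _ _ _ (by simp)]
      simp

lemma val_cons (k : ℕ) (s : List ℕ) : nval (k :: s) s.length = k := by
  rw [nval, List.reverse_cons, List.getD_append_right _ _ _ _ (by simp)]
  simp

lemma res_suffix (y : ℕ → ℕ) {m n : ℕ} (h : m ≤ n) : res y m <:+ res y n := by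
  induction n with
  | zero => have : m = 0 := by omega
            subst this; exact List.suffix_rfl
  | succ n ih =>
    rcases Nat.lt_or_ge m (n+1) with h' | h'
    · refine (ih (by omega)).trans ?_
      rw [res_succ]; exact List.suffix_cons _ _
    · have : m = n+1 := by omega
      subst this; exact List.suffix_rfl

lemma suffix_val {s t : List ℕ} (h : s <:+ t) {i : ℕ} (hi : i < s.length) :
    nval s i = nval t i := by
  obtain ⟨u, rfl⟩ := h
  rw [nval, nval, List.reverse_append, List.getD_append _ _ _ _ (by simpa using hi)]

lemma suffix_eq_of_length {l1 l2 l : List ℕ} (h1 : l1 <:+ l) (h2 : l2 <:+ l)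
    (h : l1.length = l2.length) : l1 = l2 := by
  rw [List.suffix_iff_eq_drop] at h1 h2; rw [h1, h2, h]

lemma cons_suffix_of_lt {u v : List ℕ} (h : u <:+ v) (hl : u.length < v.length) :
    ∃ c, c :: u <:+ v := by
  induction v with
  | nil => rw [List.suffix_nil] at h; subst h; simp at hl
  | cons d w ih =>
    rcases List.suffix_cons_iff.1 h with rfl | hw
    · simp at hl
    · rcases Nat.lt_or_ge u.length w.length with h' | h'
      · exact (ih hw h').imp fun c hc => hc.trans (List.suffix_cons d w)
      · exact ⟨d, by rw [hw.eq_of_length (le_antisymm hw.length_le h')]⟩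

lemma res_eq_of (y : ℕ → ℕ) (s : List ℕ) (h : ∀ i < s.length, y i = nval s i) :
    res y s.length = s := by
  induction s with
  | nil => exact res_zero y
  | cons a s' ih =>
    have hlen : (a :: s').length = s'.length + 1 := rfl
    rw [hlen, res_succ]
    have h1 : y s'.length = a := by
      have := h s'.length (by simp)
      rwa [val_cons] at this
    have h2 : res y s'.length = s' := by
      apply ih
      intro i hi
      rw [h i (by simp; omega), suffix_val (List.suffix_cons a s') hi]
    rw [h1, h2]

lemma cyl_res {y z : ℕ → ℕ} {n : ℕ} (h : z ∈ cylinder y n) : res z n = res y n :=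
  res_eq_res.2 (mem_cylinder_iff.1 h)

lemma Ext_mono {s t : List ℕ} (h : s <:+ t) : Ext t ⊆ Ext s := by
  intro y hy
  have h1 : res y s.length <:+ res y t.length := res_suffix y h.length_le
  rw [mem_Ext.1 hy] at h1
  exact suffix_eq_of_length h1 h (by simp [res_length])

lemma isOpen_Ext (s : List ℕ) : IsOpen (Ext s) := by
  refine isOpen_iff_mem_nhds.2 fun y hy => ?_
  refine Filter.mem_of_superset
    ((isOpen_cylinder _ y s.length).mem_nhds (self_mem_cylinder _ _)) fun z hz => ?_
  rw [mem_Ext, cyl_res hz, mem_Ext.1 hy]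

lemma isClosed_Ext (s : List ℕ) : IsClosed (Ext s) := by
  rw [← isOpen_compl_iff]
  refine isOpen_iff_mem_nhds.2 fun y hy => ?_
  refine Filter.mem_of_superset
    ((isOpen_cylinder _ y s.length).mem_nhds (self_mem_cylinder _ _)) fun z hz hc => ?_
  rw [mem_Ext, cyl_res hz] at hc
  exact hy hc

lemma Ext_iUnion (s : List ℕ) : Ext s = ⋃ k, Ext (k :: s) := by
  ext y
  constructor
  · intro hy
    refine mem_iUnion.2 ⟨y s.length, ?_⟩
    rw [mem_Ext]
    show res y (s.length + 1) = y s.length :: s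
    rw [res_succ, mem_Ext.1 hy]
  · rintro hy
    obtain ⟨k, hk⟩ := mem_iUnion.1 hy
    exact Ext_mono (List.suffix_cons k s) hk

/-! ### Big nodes -/

def Big (C : Set (ℕ → ℕ)) (s : List ℕ) : Prop := ¬ IsSigmaCompact (C ∩ Ext s)

variable {C : Set (ℕ → ℕ)}

lemma Big.nonempty {s : List ℕ} (h : Big C s) : (C ∩ Ext s).Nonempty := by
  rw [Set.nonempty_iff_ne_empty]
  intro he
  exact h (he ▸ isSigmaCompact_empty)

lemma Big.of_suffix (hCl : IsClosed C) {s t : List ℕ} (h : s <:+ t) (ht : Big C t) :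
    Big C s := by
  intro hs
  exact ht (hs.of_isClosed_subset (hCl.inter (isClosed_Ext t))
    (Set.inter_subset_inter_right _ (Ext_mono h)))

lemma Big.exists_child {s : List ℕ} (h : Big C s) : ∃ k, Big C (k :: s) := by
  by_contra hk
  push_neg at hk
  apply h
  have he : C ∩ Ext s = ⋃ k, C ∩ Ext (k :: s) := by
    rw [← Set.inter_iUnion, ← Ext_iUnion]
  rw [he]
  exact isSigmaCompact_iUnion _ fun k => not_not.1 (hk k)

lemma exists_infinite_splitting (hCl : IsClosed C) {s : List ℕ} (hs : Big C s) :
    ∃ t, s <:+ t ∧ Big C t ∧ {k | Big C (k :: t)}.Infinite := by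
  classical
  by_contra H
  push_neg at H
  have H' : ∀ t, s <:+ t → Big C t → {k | Big C (k :: t)}.Finite :=
    fun t h1 h2 => H t h1 h2
  set Lev : ℕ → Set (List ℕ) := fun n =>
    {t | t.length = s.length + n ∧ s <:+ t ∧ Big C t} with hLev
  have lev_fin : ∀ n, (Lev n).Finite := by
    intro n
    induction n with
    | zero =>
      refine Set.Finite.subset (Set.finite_singleton s) ?_
      rintro t ⟨hl, hsuf, -⟩
      have : s = t := hsuf.eq_of_length (by omega)
      simp [← this]
    | succ n ih =>
      have hsub : Lev (n+1) ⊆ ⋃ t ∈ Lev n, (fun k => k :: t) '' {k | Big C (k :: t)} := by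
        rintro u ⟨hl, hsuf, hbig⟩
        match u with
        | [] => exact absurd hl (by simp only [List.length_nil]; omega)
        | k :: t =>
          have hlt : t.length = s.length + n := by
            simp only [List.length_cons] at hl; omega
          have hst : s <:+ t := by
            rcases List.suffix_cons_iff.1 hsuf with rfl | hw
            · exfalso; simp only [List.length_cons] at hl; omega
            · exact hw
          have hbt : Big C t := Big.of_suffix hCl (List.suffix_cons k t) hbig
          exact Set.mem_biUnion ⟨hlt, hst, hbt⟩ ⟨k, hbig, rfl⟩
      exact Set.Finite.subset (Set.Finite.biUnion ih
        (fun t ht => Set.Finite.image _ (H' t ht.2.1 ht.2.2))) hsub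
  set G : ℕ → Set ℕ := fun i =>
    if i < s.length then {nval s i} else (fun t => t.headI) '' Lev (i + 1 - s.length)
    with hG
  have Gfin : ∀ i, (G i).Finite := by
    intro i
    by_cases h : i < s.length
    · simp [hG, h]
    · simpa [hG, h] using (lev_fin _).image _
  have Kcpt : IsCompact {y : ℕ → ℕ | ∀ i, y i ∈ G i} := by
    have he : {y : ℕ → ℕ | ∀ i, y i ∈ G i} = Set.pi Set.univ G := by
      ext y; simp [Set.mem_pi]
    rw [he]
    exact isCompact_univ_pi fun i => (Gfin i).isCompact
  set Bad : Set (ℕ → ℕ) :=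
    ⋃ t : List ℕ, if s <:+ t ∧ ¬ Big C t then C ∩ Ext t else ∅ with hBad
  have badSigma : IsSigmaCompact Bad := by
    refine isSigmaCompact_iUnion _ fun t => ?_
    split_ifs with h
    · exact not_not.1 h.2
    · exact isSigmaCompact_empty
  have cover : C ∩ Ext s ⊆ {y : ℕ → ℕ | ∀ i, y i ∈ G i} ∪ Bad := by
    rintro y ⟨hyC, hyE⟩
    by_cases hall : ∀ n, Big C (res y (s.length + n))
    · left
      intro i
      by_cases h : i < s.length
      · simp only [hG, if_pos h]
        have hv : nval (res y s.length) i = y i := val_res y h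
        rw [mem_Ext.1 hyE] at hv
        simp [← hv]
      · simp only [hG, if_neg h]
        refine ⟨res y (i+1), ⟨by rw [res_length]; omega, ?_, ?_⟩, ?_⟩
        · have := res_suffix y (show s.length ≤ i+1 by omega)
          rwa [mem_Ext.1 hyE] at this
        · have := hall (i + 1 - s.length)
          rwa [show s.length + (i+1-s.length) = i+1 by omega] at this
        · rw [res_succ]; rfl
    · right
      push_neg at hall
      obtain ⟨n, hn⟩ := hall
      refine mem_iUnion.2 ⟨res y (s.length + n), ?_⟩
      have hsuf : s <:+ res y (s.length + n) := by
        have := res_suffix y (Nat.le_add_right s.length n)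
        rwa [mem_Ext.1 hyE] at this
      rw [if_pos ⟨hsuf, hn⟩]
      refine ⟨hyC, ?_⟩
      rw [mem_Ext, res_length]
  refine hs (IsSigmaCompact.of_isClosed_subset ?_ (hCl.inter (isClosed_Ext s)) cover)
  rw [Set.union_eq_iUnion]
  refine isSigmaCompact_iUnion _ fun b => ?_
  cases b <;> simp [Kcpt.isSigmaCompact, badSigma]

/-! ### The scheme -/

open Classical in
noncomputable def Nfun (C : Set (ℕ → ℕ)) (s : List ℕ) : List ℕ :=
  if h : ∃ t, s <:+ t ∧ Big C t ∧ {k | Big C (k :: t)}.Infinite then h.choose else s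

lemma Nfun_suffix (s : List ℕ) : s <:+ Nfun C s := by
  rw [Nfun]
  split_ifs with h
  · exact h.choose_spec.1
  · exact List.suffix_rfl

lemma Nfun_spec (hCl : IsClosed C) {s : List ℕ} (hs : Big C s) :
    Big C (Nfun C s) ∧ {k | Big C (k :: Nfun C s)}.Infinite := by
  rw [Nfun]
  split_ifs with h
  · exact ⟨h.choose_spec.2.1, h.choose_spec.2.2⟩
  · exact absurd (exists_infinite_splitting hCl hs) h

noncomputable def phi (C : Set (ℕ → ℕ)) : List ℕ → List ℕ
  | [] => Nfun C []
  | (n :: u) => Nfun C (Nat.nth (fun k => Big C (k :: phi C u)) n :: phi C u)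

lemma phi_cons_suffix (n : ℕ) (u : List ℕ) :
    (Nat.nth (fun k => Big C (k :: phi C u)) n :: phi C u) <:+ phi C (n :: u) :=
  Nfun_suffix _

lemma phi_suffix_cons (n : ℕ) (u : List ℕ) : phi C u <:+ phi C (n :: u) :=
  (List.suffix_cons _ _).trans (phi_cons_suffix n u)

lemma phi_length (u : List ℕ) : u.length ≤ (phi C u).length := by
  induction u with
  | nil => simp
  | cons n u ih =>
    have h := (phi_cons_suffix (C := C) n u).length_le
    simp only [List.length_cons] at h ⊢
    omega

lemma phi_mono {u v : List ℕ} (h : u <:+ v) : phi C u <:+ phi C v := by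
  induction v with
  | nil => rw [List.suffix_nil] at h; subst h; exact List.suffix_rfl
  | cons n v' ih =>
    rcases List.suffix_cons_iff.1 h with rfl | hw
    · exact List.suffix_rfl
    · exact (ih hw).trans (phi_suffix_cons n v')

lemma phi_split_val (n : ℕ) (u : List ℕ) :
    nval (phi C (n :: u)) (phi C u).length = Nat.nth (fun k => Big C (k :: phi C u)) n := by
  rw [← suffix_val (phi_cons_suffix n u) (by simp), val_cons]

variable (hCl : IsClosed C) (h0 : Big C [])
include hCl h0

lemma phi_invariant (u : List ℕ) :
    Big C (phi C u) ∧ {k | Big C (k :: phi C u)}.Infinite := by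
  induction u with
  | nil => exact Nfun_spec hCl h0
  | cons n u ih =>
    exact Nfun_spec hCl (Nat.nth_mem_of_infinite ih.2 n)

omit hCl h0

noncomputable def gmap (C : Set (ℕ → ℕ)) (x : ℕ → ℕ) : ℕ → ℕ := fun i => nval (phi C (res x (i+1))) i

lemma glen (x : ℕ → ℕ) (i : ℕ) : i < (phi C (res x (i+1))).length :=
  lt_of_lt_of_le (by rw [res_length]; omega) (phi_length (res x (i+1)))

lemma gcoh (x : ℕ → ℕ) (n i : ℕ) (h : i < (phi C (res x n)).length) :
    gmap C x i = nval (phi C (res x n)) i := by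
  rcases Nat.le_total n (i+1) with h' | h'
  · exact (suffix_val (phi_mono (res_suffix x h')) h).symm
  · exact suffix_val (phi_mono (res_suffix x h')) (glen x i)

lemma res_gmap (x : ℕ → ℕ) (n : ℕ) :
    res (gmap C x) (phi C (res x n)).length = phi C (res x n) := by
  apply res_eq_of
  intro i hi
  exact gcoh x n i hi

include hCl h0

lemma gmap_mem (x : ℕ → ℕ) : gmap C x ∈ C := by
  have hcl : gmap C x ∈ closure C := by
    rw [mem_closure_iff]
    intro o ho hgo
    obtain ⟨c, ⟨z, m, rfl⟩, hc1, hc2⟩ :=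
      (isTopologicalBasis_cylinders (fun _ : ℕ => ℕ)).exists_subset_of_mem_open hgo ho
    obtain ⟨w, hwC, hwE⟩ := (phi_invariant hCl h0 (res x m)).1.nonempty
    refine ⟨w, hc2 ?_, hwC⟩
    rw [← mem_cylinder_iff_eq.1 hc1]
    rw [mem_cylinder_iff]
    intro i hi
    have hL : m ≤ (phi C (res x m)).length :=
      le_trans (by rw [res_length]) (phi_length (res x m))
    have hiL : i < (phi C (res x m)).length := lt_of_lt_of_le hi hL
    have h1 : w i = nval (phi C (res x m)) i := by
      have hv := val_res w hiL
      rw [mem_Ext.1 hwE] at hv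
      exact hv.symm
    rw [h1]
    exact (gcoh x m i hiL).symm
  rwa [hCl.closure_eq] at hcl

lemma gmap_inj : Function.Injective (gmap C) := by
  intro x y hxy
  by_contra hne
  have hex : ∃ i, x i ≠ y i := by
    by_contra h
    push_neg at h
    exact hne (funext h)
  set i := Nat.find hex with hi
  have hdiff : x i ≠ y i := Nat.find_spec hex
  have hres : res x i = res y i := res_eq_res.2 fun j hj => by
    have := Nat.find_min hex hj
    push_neg at this
    exact this
  have key : ∀ z : ℕ → ℕ, res z i = res x i →
      gmap C z (phi C (res x i)).length
        = Nat.nth (fun k => Big C (k :: phi C (res x i))) (z i) := by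
    intro z hz
    have hresz : res z (i+1) = z i :: res x i := by rw [res_succ, hz]
    have hp : (phi C (res x i)).length < (phi C (z i :: res x i)).length := by
      have := (phi_cons_suffix (C := C) (z i) (res x i)).length_le
      simp only [List.length_cons] at this
      omega
    have hg := gcoh (C := C) z (i+1) (phi C (res x i)).length (by rw [hresz]; exact hp)
    rw [hresz] at hg
    rw [hg, phi_split_val]
  have e1 := key x rfl
  have e2 := key y hres.symm
  rw [hxy] at e1
  rw [e1] at e2
  exact hdiff (Nat.nth_injective (phi_invariant hCl h0 (res x i)).2 e2)

omit hCl h0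

lemma gmap_cont : Continuous (gmap C) := by
  apply continuous_pi
  intro i
  rw [continuous_iff_continuousAt]
  intro x
  have hev : (fun y => gmap C y i) =ᶠ[nhds x] (fun _ => gmap C x i) := by
    filter_upwards [(isOpen_cylinder (fun _ : ℕ => ℕ) x (i+1)).mem_nhds
      (self_mem_cylinder x (i+1))] with y hy
    show gmap C y i = gmap C x i
    rw [gmap, gmap, cyl_res hy]
  exact continuousAt_const.congr hev.symm

include hCl h0

lemma gmap_res_rev : ∀ (u : List ℕ) (x : ℕ → ℕ),
    res (gmap C x) (phi C u).length = phi C u → res x u.length = u := by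
  intro u
  induction u with
  | nil => intro x _; exact res_zero x
  | cons n u ih =>
    intro x h
    have hu : res (gmap C x) (phi C u).length = phi C u := by
      have hsuf : res (gmap C x) (phi C u).length
          <:+ res (gmap C x) (phi C (n :: u)).length :=
        res_suffix _ (phi_suffix_cons n u).length_le
      rw [h] at hsuf
      exact suffix_eq_of_length hsuf (phi_mono (List.suffix_cons n u)) (by simp [res_length])
    have hxu : res x u.length = u := ih x hu
    have hresm : res x (u.length + 1) = x u.length :: u := by rw [res_succ, hxu]
    have e1 : gmap C x (phi C u).length
        = Nat.nth (fun k => Big C (k :: phi C u)) (x u.length) := by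
      have h1 := res_gmap (C := C) x (u.length + 1)
      rw [hresm] at h1
      have hp : (phi C u).length < (phi C (x u.length :: u)).length := by
        have := (phi_cons_suffix (C := C) (x u.length) u).length_le
        simp only [List.length_cons] at this
        omega
      have hv := val_res (gmap C x) hp
      rw [h1] at hv
      rw [← hv, phi_split_val]
    have e2 : gmap C x (phi C u).length
        = Nat.nth (fun k => Big C (k :: phi C u)) n := by
      have hp : (phi C u).length < (phi C (n :: u)).length := by
        have := (phi_cons_suffix (C := C) n u).length_le
        simp only [List.length_cons] at this
        omega
      have hv := val_res (gmap C x) hp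
      rw [h] at hv
      rw [← hv, phi_split_val]
    have hmn : x u.length = n := by
      apply Nat.nth_injective (phi_invariant hCl h0 u).2
      rw [← e1, ← e2]
    show res x (u.length + 1) = n :: u
    rw [hresm, hmn]

lemma gmap_mem_Ext_iff (u : List ℕ) (x : ℕ → ℕ) :
    gmap C x ∈ Ext (phi C u) ↔ res x u.length = u := by
  constructor
  · exact gmap_res_rev hCl h0 u x
  · intro h
    have := res_gmap (C := C) x u.length
    rwa [h] at this

omit hCl h0

lemma ext_split {k : ℕ} {u : List ℕ} {y : ℕ → ℕ} (hy : y ∈ Ext (phi C (k :: u))) :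
    y (phi C u).length = Nat.nth (fun j => Big C (j :: phi C u)) k := by
  have hp : (phi C u).length < (phi C (k :: u)).length := by
    have := (phi_cons_suffix (C := C) k u).length_le
    simp only [List.length_cons] at this
    omega
  have hv := val_res y hp
  rw [mem_Ext.1 hy] at hv
  rw [← hv, phi_split_val]

include hCl h0

lemma cmp_case {a b : ℕ} {u' v' : List ℕ} {y : ℕ → ℕ}
    (hy1 : y ∈ Ext (phi C (a :: u'))) (hy2 : y ∈ Ext (phi C (b :: v')))
    (hsuf : u' <:+ v') : (a :: u') <:+ (b :: v') := by
  rcases eq_or_lt_of_le hsuf.length_le with heq | hlt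
  · have huv : u' = v' := hsuf.eq_of_length heq
    subst huv
    have hab : a = b := Nat.nth_injective (phi_invariant hCl h0 u').2
      ((ext_split hy1).symm.trans (ext_split hy2))
    subst hab
    exact List.suffix_rfl
  · obtain ⟨c, hc⟩ := cons_suffix_of_lt hsuf hlt
    have hy3 : y ∈ Ext (phi C (c :: u')) :=
      Ext_mono (phi_mono (hc.trans (List.suffix_cons b v'))) hy2
    have hac : a = c := Nat.nth_injective (phi_invariant hCl h0 u').2
      ((ext_split hy1).symm.trans (ext_split hy3))
    subst hac
    exact hc.trans (List.suffix_cons b v')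

lemma ext_comparable {u : List ℕ} : ∀ {v : List ℕ} {y : ℕ → ℕ},
    y ∈ Ext (phi C u) → y ∈ Ext (phi C v) → u <:+ v ∨ v <:+ u := by
  induction u with
  | nil => intro v y _ _; exact Or.inl List.nil_suffix
  | cons a u' ih =>
    intro v y hu hv
    cases v with
    | nil => exact Or.inr List.nil_suffix
    | cons b v' =>
      have h1 : y ∈ Ext (phi C u') := Ext_mono (phi_mono (List.suffix_cons a u')) hu
      have h2 : y ∈ Ext (phi C v') := Ext_mono (phi_mono (List.suffix_cons b v')) hv
      rcases ih h1 h2 with hs | hs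
      · exact Or.inl (cmp_case hCl h0 hu hv hs)
      · exact Or.inr (cmp_case hCl h0 hv hu hs)

def Sn (C : Set (ℕ → ℕ)) (n : ℕ) : Set (ℕ → ℕ) := ⋃ (u : List ℕ) (_ : u.length = n), Ext (phi C u)

omit hCl h0

lemma mem_Sn {n : ℕ} {y : ℕ → ℕ} :
    y ∈ Sn C n ↔ ∃ u : List ℕ, u.length = n ∧ y ∈ Ext (phi C u) := by
  simp [Sn]

lemma Sn_zero : Sn C 0 = Ext (phi C []) := by
  ext y
  rw [mem_Sn]
  constructor
  · rintro ⟨u, hu, hy⟩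
    rwa [List.length_eq_zero_iff.1 hu] at hy
  · intro hy
    exact ⟨[], rfl, hy⟩

lemma Sn_succ_subset (n : ℕ) : Sn C (n+1) ⊆ Sn C n := by
  intro y hy
  obtain ⟨u, hu, hyu⟩ := mem_Sn.1 hy
  match u with
  | [] => simp at hu
  | d :: u' =>
    refine mem_Sn.2 ⟨u', by simpa using hu, ?_⟩
    exact Ext_mono (phi_mono (List.suffix_cons d u')) hyu

include hCl h0

lemma range_gmap_eq : Set.range (gmap C) = ⋂ n, Sn C n := by
  apply subset_antisymm
  · rintro _ ⟨x, rfl⟩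
    refine mem_iInter.2 fun n => mem_Sn.2 ⟨res x n, res_length x n, ?_⟩
    exact (gmap_mem_Ext_iff hCl h0 (res x n) x).2 (by rw [res_length])
  · intro y hy
    rw [mem_iInter] at hy
    have hex : ∀ n, ∃ u : List ℕ, u.length = n ∧ y ∈ Ext (phi C u) :=
      fun n => mem_Sn.1 (hy n)
    choose u hulen huy using hex
    have chain : ∀ m n, m ≤ n → u m <:+ u n := by
      intro m n hmn
      rcases ext_comparable hCl h0 (huy m) (huy n) with h | h
      · exact h
      · have := h.length_le
        rw [hulen, hulen] at this
        have hmn' : m = n := le_antisymm hmn this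
        subst hmn'
        exact List.suffix_rfl
    set x : ℕ → ℕ := fun i => nval (u (i+1)) i with hx
    have hresx : ∀ n, res x n = u n := by
      intro n
      have := res_eq_of x (u n) fun i hi => by
        rw [hulen] at hi
        exact suffix_val (chain (i+1) n hi) (by rw [hulen]; omega)
      rwa [hulen] at this
    refine ⟨x, funext fun i => ?_⟩
    have h1 : gmap C x i = nval (phi C (u (i+1))) i := by
      rw [gmap, hresx]
    have h2 : y i = nval (phi C (u (i+1))) i := by
      have hiL : i < (phi C (u (i+1))).length :=
        lt_of_lt_of_le (by rw [hulen]; omega) (phi_length (u (i+1)))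
      have hv := val_res y hiL
      rw [mem_Ext.1 (huy (i+1))] at hv
      exact hv.symm
    rw [h1, ← h2]

lemma Sn_closed : ∀ n, IsClosed (Sn C n) := by
  intro n
  induction n with
  | zero => rw [Sn_zero]; exact isClosed_Ext _
  | succ n ih =>
    rw [← closure_subset_iff_isClosed]
    intro y hy
    have hySn : y ∈ Sn C n := by
      have := closure_mono (Sn_succ_subset (C := C) n) hy
      rwa [ih.closure_eq] at this
    obtain ⟨u, hulen, hyu⟩ := mem_Sn.1 hySn
    set p := (phi C u).length with hp
    have near : ∀ m, ∃ z, z ∈ Sn C (n+1) ∧ z ∈ cylinder y m := by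
      intro m
      obtain ⟨z, hz1, hz2⟩ := mem_closure_iff.1 hy (cylinder y m)
        (isOpen_cylinder _ y m) (self_mem_cylinder y m)
      exact ⟨z, hz2, hz1⟩
    have key : ∀ z, z ∈ Sn C (n+1) → z ∈ cylinder y (p+1) →
        ∃ d, z ∈ Ext (phi C (d :: u)) ∧
          z p = Nat.nth (fun k => Big C (k :: phi C u)) d := by
      intro z hzS hzc
      obtain ⟨w, hwlen, hzw⟩ := mem_Sn.1 hzS
      match w with
      | [] => simp at hwlen
      | d :: w' =>
        have hw'len : w'.length = n := by simpa using hwlen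
        have hzw' : z ∈ Ext (phi C w') := Ext_mono (phi_mono (List.suffix_cons d w')) hzw
        have hzu : z ∈ Ext (phi C u) := by
          have hres : res z p = res y p := res_eq_res.2 fun i hi =>
            mem_cylinder_iff.1 hzc i (by omega)
          show res z p = phi C u
          rw [hres]
          exact mem_Ext.1 hyu
        have hwu : w' = u := by
          rcases ext_comparable hCl h0 hzw' hzu with h | h
          · exact h.eq_of_length (by omega)
          · exact (h.eq_of_length (by omega)).symm
        subst hwu
        exact ⟨d, hzw, ext_split hzw⟩
    obtain ⟨z1, hz1S, hz1c⟩ := near (p+1)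
    obtain ⟨d0, hz1E, hz1v⟩ := key z1 hz1S hz1c
    set L := (phi C (d0 :: u)).length with hL
    have hpL : p + 1 ≤ L := by
      have := (phi_cons_suffix (C := C) d0 u).length_le
      simp only [List.length_cons] at this
      omega
    obtain ⟨z2, hz2S, hz2c⟩ := near L
    obtain ⟨d1, hz2E, hz2v⟩ := key z2 hz2S (cylinder_anti y hpL hz2c)
    have hd : d1 = d0 := by
      apply Nat.nth_injective (phi_invariant hCl h0 u).2
      rw [← hz2v, ← hz1v]
      have e1 : z1 p = y p := mem_cylinder_iff.1 hz1c p (by omega)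
      have e2 : z2 p = y p := mem_cylinder_iff.1 hz2c p (by omega)
      rw [e1, e2]
    rw [hd] at hz2E
    have hyext : y ∈ Ext (phi C (d0 :: u)) := by
      have hres : res y L = res z2 L := (res_eq_res.2 fun i hi =>
        mem_cylinder_iff.1 hz2c i hi).symm
      show res y L = phi C (d0 :: u)
      rw [hres]
      exact mem_Ext.1 hz2E
    exact mem_Sn.2 ⟨d0 :: u, by simp [hulen], hyext⟩

/-- The homeomorphism onto the range. -/
noncomputable def gHomeo : (ℕ → ℕ) ≃ₜ ↥(Set.range (gmap C)) where
  toEquiv := Equiv.ofInjective (gmap C) (gmap_inj hCl h0)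
  continuous_toFun := by
    show Continuous fun x => Equiv.ofInjective (gmap C) (gmap_inj hCl h0) x
    exact Continuous.subtype_mk (gmap_cont (C := C)) _
  continuous_invFun := by
    apply continuous_pi
    intro i
    rw [continuous_iff_continuousAt]
    intro a
    set e := Equiv.ofInjective (gmap C) (gmap_inj hCl h0) with he
    set x := e.symm a with hxdef
    have hax : gmap C x = a.1 := by
      have := e.apply_symm_apply a
      exact congrArg Subtype.val this
    set M := (phi C (res x (i+1))).length with hM
    have hmem : (Subtype.val ⁻¹' (cylinder a.1 M) : Set ↥(Set.range (gmap C))) ∈ nhds a := by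
      refine ((isOpen_cylinder (fun _ : ℕ => ℕ) a.1 M).preimage continuous_subtype_val).mem_nhds ?_
      exact self_mem_cylinder _ _
    have hev : (fun b : ↥(Set.range (gmap C)) => (e.symm b) i) =ᶠ[nhds a]
        (fun _ => x i) := by
      filter_upwards [hmem] with b hb
      set x' := e.symm b with hx'def
      have hbx : gmap C x' = b.1 := by
        have := e.apply_symm_apply b
        exact congrArg Subtype.val this
      have h1 : res (gmap C x') M = res (gmap C x) M := by
        rw [hbx, hax]
        exact cyl_res hb
      have h2 : res (gmap C x') M = phi C (res x (i+1)) :=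
        h1.trans (res_gmap (C := C) x (i+1))
      have h3 : res x' (res x (i+1)).length = res x (i+1) :=
        gmap_res_rev hCl h0 (res x (i+1)) x' h2
      rw [res_length] at h3
      exact res_eq_res.1 h3 (show i < i + 1 by omega)
    exact continuousAt_const.congr hev.symm

omit hCl h0

/-- Main result: a closed non-σ-compact subset of Baire space contains a closed
subset homeomorphic to Baire space. -/
theorem exists_closed_baire_subset (C : Set (ℕ → ℕ)) (hCl : IsClosed C)
    (hns : ¬ IsSigmaCompact C) :
    ∃ A : Set (ℕ → ℕ), A ⊆ C ∧ IsClosed A ∧ A.Nonempty ∧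
      Nonempty ((ℕ → ℕ) ≃ₜ ↥A) := by
  have h0 : Big C [] := by
    rw [Big]
    have : Ext ([] : List ℕ) = Set.univ := by
      ext y; simp [Ext, res_zero]
    rw [this, Set.inter_univ]
    exact hns
  refine ⟨Set.range (gmap C), ?_, ?_, ?_, ⟨gHomeo hCl h0⟩⟩
  · rintro _ ⟨x, rfl⟩
    exact gmap_mem hCl h0 x
  · rw [range_gmap_eq hCl h0]
    exact isClosed_iInter (Sn_closed hCl h0)
  · exact ⟨gmap C (fun _ => 0), Set.mem_range_self _⟩

end Hur


open Set Function Filter Topology PiNat TopologicalSpace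

namespace Emb

lemma res_suffix' (y : ℕ → ℕ) {m n : ℕ} (h : m ≤ n) : res y m <:+ res y n := by
  induction n with
  | zero => have : m = 0 := by omega
            subst this; exact List.suffix_rfl
  | succ n ih =>
    rcases Nat.lt_or_ge m (n+1) with h' | h'
    · refine (ih (by omega)).trans ?_
      rw [res_succ]; exact List.suffix_cons _ _
    · have : m = n+1 := by omega
      subst this; exact List.suffix_rfl

lemma cyl_res' {y z : ℕ → ℕ} {n : ℕ} (h : z ∈ cylinder y n) : res z n = res y n :=
  res_eq_res.2 (mem_cylinder_iff.1 h)

variable {X : Type*} [MetricSpace X] [SecondCountableTopology X]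

lemma partition_lemma (hbasis : IsTopologicalBasis {s : Set X | IsClopen s})
    {U : Set X} (hU : IsClopen U) {ε : ℝ} (hε : 0 < ε) :
    ∃ V : ℕ → Set X, (∀ n, IsClopen (V n)) ∧ (∀ n, V n ⊆ U) ∧
      (∀ n, ∀ x ∈ V n, ∀ y ∈ V n, dist x y ≤ ε) ∧
      (Pairwise (Function.onFun Disjoint V)) ∧ (⋃ n, V n) = U := by
  set S : Set (Set X) := {s | IsClopen s ∧ s ⊆ U ∧ ∀ x ∈ s, ∀ y ∈ s, dist x y ≤ ε}
    with hS
  have hUnion : ⋃₀ S = U := by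
    apply subset_antisymm
    · exact sUnion_subset fun s hs => hs.2.1
    · intro x hx
      have hball : IsOpen (Metric.ball x (ε/2) ∩ U) :=
        Metric.isOpen_ball.inter hU.isOpen
      have hxball : x ∈ Metric.ball x (ε/2) ∩ U :=
        ⟨Metric.mem_ball_self (by linarith), hx⟩
      obtain ⟨t, ht, hxt, htsub⟩ := hbasis.exists_subset_of_mem_open hxball hball
      refine ⟨t, ⟨ht, fun z hz => (htsub hz).2, fun a ha b hb => ?_⟩, hxt⟩
      have h1 : dist a x < ε/2 := Metric.mem_ball.1 (htsub ha).1
      have h2 : dist b x < ε/2 := Metric.mem_ball.1 (htsub hb).1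
      calc dist a b ≤ dist a x + dist x b := dist_triangle a x b
        _ ≤ ε := by rw [dist_comm x b]; linarith
  obtain ⟨T, hTc, hTS, hTU⟩ := isOpen_sUnion_countable S fun s hs => hs.1.isOpen
  have hTS' : insert ∅ T ⊆ S := by
    refine insert_subset ⟨isClopen_empty, empty_subset U, by simp⟩ hTS
  obtain ⟨f, hf⟩ := (hTc.insert ∅).exists_eq_range (insert_nonempty ∅ T)
  have hfS : ∀ n, f n ∈ S := fun n => hTS' (hf ▸ mem_range_self n)
  have hfU : ⋃ n, f n = U := by
    rw [← Set.sUnion_range, ← hf, Set.sUnion_insert, Set.empty_union, hTU, hUnion]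
  have hpart : ∀ n, IsClopen (partialSups f n) := by
    intro n
    induction n using Nat.rec with
    | zero => simpa [partialSups_zero] using (hfS 0).1
    | succ n ih => rw [show n.succ = Order.succ n from rfl, partialSups_succ]; exact ih.union (hfS (n+1)).1
  refine ⟨disjointed f, ?_, ?_, ?_, disjoint_disjointed f, ?_⟩
  · intro n
    cases n with
    | zero => simpa [disjointed_zero] using (hfS 0).1
    | succ n => rw [show n + 1 = Order.succ n from rfl, disjointed_succ _ (not_isMax n)]; exact (hfS (n+1)).1.diff (hpart n)
  · exact fun n => (disjointed_subset f n).trans (hfS n).2.1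
  · exact fun n x hx y hy =>
      (hfS n).2.2 x (disjointed_subset f n hx) y (disjointed_subset f n hy)
  · rw [iUnion_disjointed]; exact hfU

variable (hbasis : IsTopologicalBasis {s : Set X | IsClopen s})

open Classical in
noncomputable def part (U : Set X) (ε : ℝ) : ℕ → Set X :=
  if h : IsClopen U ∧ 0 < ε then (partition_lemma hbasis h.1 h.2).choose
  else fun _ => ∅

lemma part_spec {U : Set X} (hU : IsClopen U) {ε : ℝ} (hε : 0 < ε) :
    (∀ n, IsClopen (part hbasis U ε n)) ∧ (∀ n, part hbasis U ε n ⊆ U) ∧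
      (∀ n, ∀ x ∈ part hbasis U ε n, ∀ y ∈ part hbasis U ε n, dist x y ≤ ε) ∧
      (Pairwise (Function.onFun Disjoint (part hbasis U ε))) ∧
      (⋃ n, part hbasis U ε n) = U := by
  rw [part, dif_pos ⟨hU, hε⟩]
  exact (partition_lemma hbasis hU hε).choose_spec

noncomputable def D : List ℕ → Set X
  | [] => univ
  | (n :: s) => part hbasis (D s) ((1/2 : ℝ) ^ s.length) n

lemma D_clopen : ∀ s : List ℕ, IsClopen (D hbasis s) := by
  intro s
  induction s with
  | nil => exact isClopen_univ
  | cons n s ih =>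
    exact (part_spec hbasis ih (by positivity)).1 n

lemma D_subset (n : ℕ) (s : List ℕ) : D hbasis (n :: s) ⊆ D hbasis s :=
  (part_spec hbasis (D_clopen hbasis s) (by positivity)).2.1 n

lemma D_small (n : ℕ) (s : List ℕ) :
    ∀ x ∈ D hbasis (n :: s), ∀ y ∈ D hbasis (n :: s), dist x y ≤ (1/2 : ℝ) ^ s.length :=
  (part_spec hbasis (D_clopen hbasis s) (by positivity)).2.2.1 n

lemma D_disj {m n : ℕ} (hmn : m ≠ n) (s : List ℕ) :
    Disjoint (D hbasis (m :: s)) (D hbasis (n :: s)) :=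
  (part_spec hbasis (D_clopen hbasis s) (by positivity)).2.2.2.1 hmn

lemma D_union (s : List ℕ) : ⋃ n, D hbasis (n :: s) = D hbasis s :=
  (part_spec hbasis (D_clopen hbasis s) (by positivity)).2.2.2.2

lemma D_suffix_mono {s t : List ℕ} (h : s <:+ t) : D hbasis t ⊆ D hbasis s := by
  induction t with
  | nil => rw [List.suffix_nil] at h; subst h; exact subset_rfl
  | cons n t ih =>
    rcases List.suffix_cons_iff.1 h with rfl | hw
    · exact subset_rfl
    · exact (D_subset hbasis n t).trans (ih hw)

open Classical in
noncomputable def dig (x : X) (s : List ℕ) : ℕ :=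
  if h : ∃ k, x ∈ D hbasis (k :: s) then h.choose else 0

noncomputable def trace (x : X) : ℕ → List ℕ
  | 0 => []
  | (n+1) => dig hbasis x (trace x n) :: trace x n

lemma trace_length (x : X) (n : ℕ) : (trace hbasis x n).length = n := by
  induction n with
  | zero => rfl
  | succ n ih => simp [trace, ih]

lemma mem_trace (x : X) (n : ℕ) : x ∈ D hbasis (trace hbasis x n) := by
  induction n with
  | zero => exact mem_univ x
  | succ n ih =>
    have hx : ∃ k, x ∈ D hbasis (k :: trace hbasis x n) := by
      have := (D_union hbasis (trace hbasis x n)).symm ▸ ih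
      exact mem_iUnion.1 this
    show x ∈ D hbasis (dig hbasis x (trace hbasis x n) :: trace hbasis x n)
    rw [dig, dif_pos hx]
    exact hx.choose_spec

lemma dig_unique {x : X} {s : List ℕ} {k : ℕ} (hx : x ∈ D hbasis (k :: s)) :
    dig hbasis x s = k := by
  have hex : ∃ k, x ∈ D hbasis (k :: s) := ⟨k, hx⟩
  rw [dig, dif_pos hex]
  by_contra hne
  exact (D_disj hbasis hne s).ne_of_mem hex.choose_spec hx rfl

lemma trace_eq_of_mem {x y : X} {n : ℕ} (h : y ∈ D hbasis (trace hbasis x n)) :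
    trace hbasis y n = trace hbasis x n := by
  induction n with
  | zero => rfl
  | succ n ih =>
    have hsub : y ∈ D hbasis (trace hbasis x n) :=
      D_subset hbasis _ _ h
    have htr : trace hbasis y n = trace hbasis x n := ih hsub
    show dig hbasis y (trace hbasis y n) :: trace hbasis y n
        = dig hbasis x (trace hbasis x n) :: trace hbasis x n
    rw [htr]
    congr 1
    refine dig_unique hbasis (show y ∈ D hbasis
      (dig hbasis x (trace hbasis x n) :: trace hbasis x n) from h)

noncomputable def fmap (x : X) : ℕ → ℕ := fun n => dig hbasis x (trace hbasis x n)

lemma trace_eq_res (x : X) (n : ℕ) : res (fmap hbasis x) n = trace hbasis x n := by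
  induction n with
  | zero => rfl
  | succ n ih => rw [res_succ, ih]; rfl

lemma dist_le_of_trace_eq {x y : X} {n : ℕ}
    (h : trace hbasis y (n+1) = trace hbasis x (n+1)) :
    dist x y ≤ (1/2 : ℝ) ^ n := by
  have hx : x ∈ D hbasis (trace hbasis x (n+1)) := mem_trace hbasis x (n+1)
  have hy : y ∈ D hbasis (trace hbasis x (n+1)) := h ▸ mem_trace hbasis y (n+1)
  have := D_small hbasis (dig hbasis x (trace hbasis x n)) (trace hbasis x n) x hx y hy
  rwa [trace_length] at this

variable [CompleteSpace X]

lemma fmap_inj : Function.Injective (fmap hbasis) := by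
  intro x y hxy
  have htr : ∀ n, trace hbasis y n = trace hbasis x n := by
    intro n
    rw [← trace_eq_res, ← trace_eq_res, hxy]
  have hd : ∀ n : ℕ, dist x y ≤ (1/2 : ℝ) ^ n :=
    fun n => dist_le_of_trace_eq hbasis (htr (n+1))
  have h0 : dist x y ≤ 0 := by
    refine le_of_tendsto_of_tendsto' tendsto_const_nhds
      (tendsto_pow_atTop_nhds_zero_of_lt_one (by norm_num) (by norm_num : (1/2:ℝ) < 1)) hd
  exact dist_le_zero.1 h0

lemma fmap_cont : Continuous (fmap hbasis) := by
  apply continuous_pi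
  intro n
  rw [continuous_iff_continuousAt]
  intro x
  have hev : (fun y => fmap hbasis y n) =ᶠ[nhds x] (fun _ => fmap hbasis x n) := by
    filter_upwards [(D_clopen hbasis (trace hbasis x (n+1))).isOpen.mem_nhds
      (mem_trace hbasis x (n+1))] with y hy
    have := trace_eq_of_mem hbasis hy
    show fmap hbasis y n = fmap hbasis x n
    have h1 : trace hbasis y (n+1) = trace hbasis x (n+1) := this
    have h2 := congrArg List.headI h1
    simpa [trace, fmap] using h2
  exact continuousAt_const.congr hev.symm

lemma res_fmap_mem {x : X} {n : ℕ} : x ∈ D hbasis (res (fmap hbasis x) n) := by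
  rw [trace_eq_res]; exact mem_trace hbasis x n

/-- The range of `fmap` is closed. -/
lemma fmap_range_closed : IsClosed (Set.range (fmap hbasis)) := by
  rw [← closure_subset_iff_isClosed]
  intro y hy
  have near : ∀ n : ℕ, ∃ x : X, res (fmap hbasis x) n = res y n := by
    intro n
    obtain ⟨z, hz1, hz2⟩ := mem_closure_iff.1 hy (cylinder y n)
      (isOpen_cylinder _ y n) (self_mem_cylinder y n)
    obtain ⟨x, rfl⟩ := hz2
    exact ⟨x, cyl_res' hz1⟩
  choose xs hxs using near
  set w : ℕ → X := fun m => xs (m+1) with hw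
  have hwD : ∀ m n : ℕ, n ≤ m + 1 → w m ∈ D hbasis (res y n) := by
    intro m n hn
    have h1 : xs (m+1) ∈ D hbasis (res (fmap hbasis (xs (m+1))) (m+1)) :=
      res_fmap_mem hbasis
    rw [hxs (m+1)] at h1
    exact D_suffix_mono hbasis (res_suffix' y hn) h1
  have hcauchy : CauchySeq w := by
    apply cauchySeq_of_le_tendsto_0 (fun N => (1/2 : ℝ) ^ N)
    · intro n m N hn hm
      have h1 : w n ∈ D hbasis (res y (N+1)) := hwD n (N+1) (by omega)
      have h2 : w m ∈ D hbasis (res y (N+1)) := hwD m (N+1) (by omega)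
      have := D_small hbasis (y N) (res y N) (w n) (by rwa [← res_succ]) (w m)
        (by rwa [← res_succ])
      rwa [res_length] at this
    · exact tendsto_pow_atTop_nhds_zero_of_lt_one (by norm_num) (by norm_num)
  obtain ⟨l, hl⟩ := cauchySeq_tendsto_of_complete hcauchy
  have hlD : ∀ n : ℕ, l ∈ D hbasis (res y n) := by
    intro n
    refine (D_clopen hbasis (res y n)).isClosed.mem_of_tendsto hl ?_
    filter_upwards [Filter.Ici_mem_atTop n] with m hm
    exact hwD m n (le_trans (Set.mem_Ici.1 hm) (Nat.le_succ m))
  have htr : ∀ n, trace hbasis l n = res y n := by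
    intro n
    induction n with
    | zero => simp [trace, res_zero]
    | succ n ih =>
      show dig hbasis l (trace hbasis l n) :: trace hbasis l n = res y (n+1)
      rw [res_succ, ih]
      congr 1
      exact dig_unique hbasis (by rw [← res_succ]; exact hlD (n+1))
  refine ⟨l, funext fun n => ?_⟩
  show dig hbasis l (trace hbasis l n) = y n
  have h1 : dig hbasis l (trace hbasis l n) :: trace hbasis l n
      = y n :: res y n := by
    have := htr (n+1)
    rwa [res_succ] at this
  simpa using congrArg List.headI h1

/-- The homeomorphism of `X` onto the (closed) range of `fmap`. -/
noncomputable def fHomeo : X ≃ₜ ↥(Set.range (fmap hbasis)) where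
  toEquiv := Equiv.ofInjective _ (fmap_inj hbasis)
  continuous_toFun := by
    show Continuous fun x => Equiv.ofInjective _ (fmap_inj hbasis) x
    exact (fmap_cont hbasis).subtype_mk _
  continuous_invFun := by
    set e := Equiv.ofInjective _ (fmap_inj hbasis) with he
    rw [continuous_iff_continuousAt]
    intro a
    rw [ContinuousAt, Metric.tendsto_nhds]
    intro ε hε
    set x := e.symm a with hx
    have hax : fmap hbasis x = a.1 := congrArg Subtype.val (e.apply_symm_apply a)
    obtain ⟨n, hn⟩ : ∃ n : ℕ, (1/2 : ℝ)^n < ε :=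
      exists_pow_lt_of_lt_one hε (by norm_num)
    have hmem : (Subtype.val ⁻¹' (cylinder a.1 (n+1)) :
        Set ↥(Set.range (fmap hbasis))) ∈ nhds a := by
      refine ((isOpen_cylinder (fun _ : ℕ => ℕ) a.1 (n+1)).preimage
        continuous_subtype_val).mem_nhds ?_
      exact self_mem_cylinder _ _
    filter_upwards [hmem] with b hb
    have hbx : fmap hbasis (e.symm b) = b.1 := congrArg Subtype.val (e.apply_symm_apply b)
    have h1 : res (fmap hbasis (e.symm b)) (n+1) = res (fmap hbasis x) (n+1) := by
      rw [hbx, hax]; exact cyl_res' hb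
    have h2 : trace hbasis (e.symm b) (n+1) = trace hbasis x (n+1) := by
      rw [← trace_eq_res, ← trace_eq_res, h1]
    have hd := dist_le_of_trace_eq hbasis h2
    calc dist (e.symm b) (e.symm a) = dist x (e.symm b) := dist_comm _ _
      _ ≤ (1/2)^n := hd
      _ < ε := hn

end Emb

theorem exists_closed_embedding_baire (X : Type*) [TopologicalSpace X] [PolishSpace X]
    (hbasis : TopologicalSpace.IsTopologicalBasis {s : Set X | IsClopen s}) :
    ∃ C : Set (ℕ → ℕ), IsClosed C ∧ Nonempty (X ≃ₜ ↥C) := by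
  letI := upgradeIsCompletelyMetrizable X
  exact ⟨Set.range (Emb.fmap hbasis), Emb.fmap_range_closed hbasis, ⟨Emb.fHomeo hbasis⟩⟩


open CpAux

/-- `Cp (ℕ × Z) ≃ᵤ (ℕ → Cp Z)`. -/
noncomputable def cpProdNat (Z : Type*) [TopologicalSpace Z] :
    Cp (ℕ × Z) ≃ᵤ (ℕ → Cp Z) where
  toFun f n := ⟨fun z => f.1 (n, z), f.2.comp (continuous_const.prodMk continuous_id)⟩
  invFun F := ⟨fun p => (F p.1).1 p.2, by
    rw [continuous_iff_continuousAt]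
    rintro ⟨n, z⟩
    have hev : (fun p : ℕ × Z => (F p.1).1 p.2) =ᶠ[nhds (n, z)]
        (fun p => (F n).1 p.2) := by
      have hnb : ({n} ×ˢ (Set.univ : Set Z)) ∈ nhds (n, z) :=
        prod_mem_nhds (by simp) Filter.univ_mem
      filter_upwards [hnb] with p hp
      rw [show p.1 = n from hp.1]
    exact (((F n).2.comp continuous_snd).continuousAt).congr hev.symm⟩
  left_inv f := Subtype.ext (funext fun p => rfl)
  right_inv F := funext fun n => Subtype.ext (funext fun z => rfl)
  uniformContinuous_toFun := uniformContinuous_pi.2 fun n => by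
    apply UniformContinuous.subtype_mk
    exact uniformContinuous_pi.2 fun z => uc_eval (n, z)
  uniformContinuous_invFun := by
    apply UniformContinuous.subtype_mk
    exact uniformContinuous_pi.2 fun p =>
      (uc_eval p.2).comp (Pi.uniformContinuous_proj _ p.1)

/-- `(ℕ → ℕ) ≃ₜ ℕ × (ℕ → ℕ)`. -/
def homeoNatProd : (ℕ → ℕ) ≃ₜ ℕ × (ℕ → ℕ) where
  toFun y := (y 0, fun n => y (n + 1))
  invFun p n := Nat.casesOn n p.1 (fun m => p.2 m)
  left_inv y := by funext n; cases n <;> rfl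
  right_inv p := by refine Prod.ext rfl (funext fun n => rfl)
  continuous_toFun :=
    (continuous_apply 0).prodMk (continuous_pi fun n => continuous_apply (n + 1))
  continuous_invFun := continuous_pi fun n => by
    cases n with
    | zero => exact continuous_fst
    | succ m => exact (continuous_apply m).comp continuous_snd


/-- If `X` is an infinite Polish zero-dimensional space which is not
σ-compact, then `C_p(X)` is uniformly homeomorphic to `C_p(ω^ω)`, and in
particular to `C_p(X) × C_p(X)`. -/
theorem cp_uniformly_homeomorphic_cp_baire
    (X : Type*) [TopologicalSpace X] [PolishSpace X] [Infinite X]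
    (hbasis : TopologicalSpace.IsTopologicalBasis {s : Set X | IsClopen s})
    (hns : ¬ SigmaCompactSpace X) :
    Nonempty (Cp X ≃ᵤ Cp (ℕ → ℕ)) ∧ Nonempty (Cp X ≃ᵤ (Cp X × Cp X)) := by
  classical
  obtain ⟨C, hCl, ⟨e⟩⟩ := exists_closed_embedding_baire X hbasis
  have hnsC : ¬ IsSigmaCompact C := by
    intro h
    apply hns
    rw [← isSigmaCompact_univ_iff]
    have h2 : IsSigmaCompact (Set.univ : Set ↥C) := by
      rwa [isSigmaCompact_iff_isSigmaCompact_univ] at h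
    have h3 := h2.image e.symm.continuous
    rwa [Set.image_univ, e.symm.surjective.range_eq] at h3
  obtain ⟨A, hAC, hAcl, hAne, ⟨eA⟩⟩ := Hur.exists_closed_baire_subset C hCl hnsC
  have hCne : C.Nonempty := hAne.mono hAC
  obtain ⟨r1, hr1fix, hr1range, hr1cont⟩ := PiNat.exists_retraction_of_isClosed hCl hCne
  obtain ⟨r2, hr2fix, hr2range, hr2cont⟩ := PiNat.exists_retraction_of_isClosed hAcl hAne
  have hr1idem : ∀ z, r1 (r1 z) = r1 z :=
    fun z => hr1fix _ (hr1range ▸ Set.mem_range_self z)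
  have hr2idem : ∀ z, r2 (r2 z) = r2 z :=
    fun z => hr2fix _ (hr2range ▸ Set.mem_range_self z)
  have hfix1 : {z : ℕ → ℕ | r1 z = z} = C := by
    ext z
    constructor
    · intro hz
      rw [← hz]
      exact hr1range ▸ Set.mem_range_self z
    · intro hz
      exact hr1fix z hz
  have split1 : Cp (ℕ → ℕ) ≃ᵤ Cp X ×
      {f : (ℕ → ℕ) → ℝ // Continuous f ∧ ∀ z, r1 z = z → f z = 0} :=
    (cpSplit r1 hr1cont hr1idem).trans
      (UniformEquiv.prodCongr
        (cpCongr ((Homeomorph.setCongr hfix1).trans e.symm)) (UniformEquiv.refl _))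
  let rC : ↥C → ↥C := fun z => ⟨r2 z.1, hAC (hr2range ▸ Set.mem_range_self (z.1))⟩
  have hrCcont : Continuous rC := (hr2cont.comp continuous_subtype_val).subtype_mk _
  have hrCidem : ∀ z, rC (rC z) = rC z := fun z => Subtype.ext (hr2idem z.1)
  have hmemA : ∀ z : {z : ↥C // rC z = z}, z.1.1 ∈ A := by
    intro z
    have h1 : r2 z.1.1 = z.1.1 := congrArg Subtype.val z.2
    rw [← h1]
    exact hr2range ▸ Set.mem_range_self _
  have hmemC : ∀ a : ↥A, a.1 ∈ C := fun a => hAC a.2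
  let eqFix : {z : ↥C // rC z = z} ≃ ↥A :=
    ⟨fun z => ⟨z.1.1, hmemA z⟩,
     fun a => ⟨⟨a.1, hmemC a⟩, by exact Subtype.ext (hr2fix a.1 a.2)⟩,
     fun z => Subtype.ext (Subtype.ext rfl),
     fun a => rfl⟩
  let eFix : {z : ↥C // rC z = z} ≃ₜ ↥A :=
    { toEquiv := eqFix,
      continuous_toFun :=
        (continuous_subtype_val.comp continuous_subtype_val).subtype_mk hmemA,
      continuous_invFun := by
        show Continuous fun a : ↥A =>
          (⟨⟨a.1, hmemC a⟩, by exact Subtype.ext (hr2fix a.1 a.2)⟩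
            : {z : ↥C // rC z = z})
        exact Continuous.subtype_mk (continuous_subtype_val.subtype_mk hmemC)
          (fun a => by exact Subtype.ext (hr2fix a.1 a.2)) }
  have split2 : Cp X ≃ᵤ Cp (ℕ → ℕ) ×
      {f : ↥C → ℝ // Continuous f ∧ ∀ z, rC z = z → f z = 0} :=
    (cpCongr e).trans ((cpSplit rC hrCcont hrCidem).trans
      (UniformEquiv.prodCongr (cpCongr (eFix.trans eA.symm)) (UniformEquiv.refl _)))
  have e3 : Cp (ℕ → ℕ) ≃ᵤ (ℕ → Cp (ℕ → ℕ)) :=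
    (cpCongr homeoNatProd).trans (cpProdNat (ℕ → ℕ))
  exact pelczynski split2 split1 e3
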